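/- arXiv:1411.5616 — 11 statements merged into one kernel-verified Lean document; each statement's English description precedes it below -/
import Mathlib

section
/- If f : ℝ → ℝ is differentiable at t > 0 and 0 < α ≤ 1, then the conformable fractional derivative D^α f(t) := lim_{ε→0} (f(t·e^{ε t^{-α}}) − f(t))/ε exists and equals t^{1−α} f'(t). -/
open Real Filter

theorem conformable_deriv_eq (f : ℝ → ℝ) (t α f' : ℝ) (ht : 0 < t)
    (hα : 0 < α) (hα1 : α ≤ 1) (hf : HasDerivAt f f' t) :
    Filter.Tendsto (fun ε : ℝ => (f (t * Real.exp (ε * t ^ (-α))) - f t) / ε)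
      (nhdsWithin 0 {(0:ℝ)}ᶜ) (nhds (t ^ (1 - α) * f')) := by
  have h1 : HasDerivAt (fun ε : ℝ => ε * t ^ (-α)) (t ^ (-α)) 0 :=
    (hasDerivAt_id 0).mul_const _ |>.congr_deriv (by ring)
  have h2 : HasDerivAt (fun ε : ℝ => t * Real.exp (ε * t ^ (-α)))
      (t * t ^ (-α)) 0 := by
    have := (Real.hasDerivAt_exp ((0:ℝ) * t ^ (-α))).comp 0 h1
    simpa using this.const_mul t
  have h3 : HasDerivAt (fun ε : ℝ => f (t * Real.exp (ε * t ^ (-α))))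
      (t ^ (1 - α) * f') 0 := by
    have h0 : t * Real.exp ((0:ℝ) * t ^ (-α)) = t := by simp
    have hf' : HasDerivAt f f' (t * Real.exp ((0:ℝ) * t ^ (-α))) := by rw [h0]; exact hf
    have := hf'.comp 0 h2
    refine this.congr_deriv ?_
    rw [show (1 : ℝ) - α = 1 + (-α) by ring, Real.rpow_add ht, Real.rpow_one]
    ring
  have := hasDerivAt_iff_tendsto_slope.mp h3
  refine this.congr (fun ε => ?_)
  simp [slope_def_field, div_eq_inv_mul]
end

section
/- Let 0 < α ≤ 1, γ, δ, η, ζ ≥ 0 with d := ηδ + γζ + γη/α > 0, and let G(t,s) be defined by G(t,s) = (1/d)[δ + (γ/α)t^α][ζ + (η/α)(1 − s^α)] for t ≤ s and G(t,s) = (1/d)[δ + (γ/α)s^α][ζ + (η/α)(1 − t^α)] for s ≤ t. Then G(t,s) ≤ G(s,s) for all t, s ∈ [0,1]. -/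
open Real

theorem green_two_point_upper (α γ δ η ζ : ℝ) (hα : 0 < α) (hα1 : α ≤ 1)
    (hγ : 0 ≤ γ) (hδ : 0 ≤ δ) (hη : 0 ≤ η) (hζ : 0 ≤ ζ)
    (hd : 0 < η * δ + γ * ζ + γ * η / α)
    (G : ℝ → ℝ → ℝ)
    (hG : ∀ t s, G t s =
      if t ≤ s then
        (1 / (η * δ + γ * ζ + γ * η / α)) * (δ + (γ / α) * t ^ α) *
          (ζ + (η / α) * (1 - s ^ α))
      else
        (1 / (η * δ + γ * ζ + γ * η / α)) * (δ + (γ / α) * s ^ α) *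
          (ζ + (η / α) * (1 - t ^ α))) :
    ∀ t ∈ Set.Icc (0:ℝ) 1, ∀ s ∈ Set.Icc (0:ℝ) 1, G t s ≤ G s s := by
  intro t ht s hs
  obtain ⟨ht0, ht1⟩ := ht
  obtain ⟨hs0, hs1⟩ := hs
  have hc : 0 < 1 / (η * δ + γ * ζ + γ * η / α) := by positivity
  rw [hG t s, hG s s, if_pos le_rfl]
  have hγα : 0 ≤ γ / α := by positivity
  have hηα : 0 ≤ η / α := by positivity
  have hspow : s ^ α ≤ 1 := Real.rpow_le_one hs0 hs1 hα.le
  have htpow : t ^ α ≤ 1 := Real.rpow_le_one ht0 ht1 hα.le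
  have hsp0 : 0 ≤ s ^ α := Real.rpow_nonneg hs0 α
  have htp0 : 0 ≤ t ^ α := Real.rpow_nonneg ht0 α
  by_cases h : t ≤ s
  · rw [if_pos h]
    have hmono : t ^ α ≤ s ^ α := Real.rpow_le_rpow ht0 h hα.le
    have h2 : (0:ℝ) ≤ ζ + (η / α) * (1 - s ^ α) := by nlinarith
    have h1 : δ + (γ / α) * t ^ α ≤ δ + (γ / α) * s ^ α := by nlinarith
    nlinarith [mul_le_mul_of_nonneg_right h1 h2, mul_le_mul_of_nonneg_left
      (mul_le_mul_of_nonneg_right h1 h2) hc.le]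
  · rw [if_neg h]
    push_neg at h
    have hmono : s ^ α ≤ t ^ α := Real.rpow_le_rpow hs0 h.le hα.le
    have h1 : 0 ≤ δ + (γ / α) * s ^ α := by positivity
    have h2 : ζ + (η / α) * (1 - t ^ α) ≤ ζ + (η / α) * (1 - s ^ α) := by nlinarith
    nlinarith [mul_le_mul_of_nonneg_left h2 h1, mul_le_mul_of_nonneg_left
      (mul_le_mul_of_nonneg_left h2 h1) hc.le]
end

section
/- Let 0 < α ≤ 1, γ, δ, η, ζ ≥ 0 with d := ηδ + γζ + γη/α > 0, and let G(t,s) be as in the two-point Green's function: G(t,s) = (1/d)[δ + (γ/α)t^α][ζ + (η/α)(1 − s^α)] for t ≤ s and symmetrically for s ≤ t. Define g(t) := min{(αδ + γt^α)/(αδ + γ), (αζ + η(1 − t^α))/(αζ + η)}. Then g(t)·G(s,s) ≤ G(t,s) for all t, s ∈ [0,1]. -/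
open Real

theorem green_two_point_lower (α γ δ η ζ : ℝ) (hα : 0 < α) (hα1 : α ≤ 1)
    (hγ : 0 ≤ γ) (hδ : 0 ≤ δ) (hη : 0 ≤ η) (hζ : 0 ≤ ζ)
    (hd : 0 < η * δ + γ * ζ + γ * η / α)
    (G : ℝ → ℝ → ℝ)
    (hG : ∀ t s, G t s =
      if t ≤ s then
        (1 / (η * δ + γ * ζ + γ * η / α)) * (δ + (γ / α) * t ^ α) *
          (ζ + (η / α) * (1 - s ^ α))
      else
        (1 / (η * δ + γ * ζ + γ * η / α)) * (δ + (γ / α) * s ^ α) *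
          (ζ + (η / α) * (1 - t ^ α)))
    (g : ℝ → ℝ)
    (hg : ∀ t, g t = min ((α * δ + γ * t ^ α) / (α * δ + γ))
        ((α * ζ + η * (1 - t ^ α)) / (α * ζ + η))) :
    ∀ t ∈ Set.Icc (0:ℝ) 1, ∀ s ∈ Set.Icc (0:ℝ) 1, g t * G s s ≤ G t s := by
  intro t ht s hs
  obtain ⟨ht0, ht1⟩ := ht
  obtain ⟨hs0, hs1⟩ := hs
  have hαne : α ≠ 0 := hα.ne'
  have hu0 : 0 ≤ t ^ α := Real.rpow_nonneg ht0 α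
  have hu1 : t ^ α ≤ 1 := Real.rpow_le_one ht0 ht1 hα.le
  have hv0 : 0 ≤ s ^ α := Real.rpow_nonneg hs0 α
  have hv1 : s ^ α ≤ 1 := Real.rpow_le_one hs0 hs1 hα.le
  have hP : 0 < α * δ + γ := by
    by_contra h
    push_neg at h
    have hδ0 : δ = 0 := by nlinarith [mul_nonneg hα.le hδ]
    have hγ0 : γ = 0 := by nlinarith
    rw [hδ0, hγ0] at hd
    simp at hd
  have hQ : 0 < α * ζ + η := by
    by_contra h
    push_neg at h
    have hζ0 : ζ = 0 := by nlinarith [mul_nonneg hα.le hζ]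
    have hη0 : η = 0 := by nlinarith
    rw [hζ0, hη0] at hd
    simp at hd
  have hg0 : 0 ≤ g t := by
    rw [hg]
    exact le_min (div_nonneg (by nlinarith) hP.le) (div_nonneg (by nlinarith) hQ.le)
  have hgA : g t * (α * δ + γ) ≤ α * δ + γ * t ^ α := by
    have h1 : g t ≤ (α * δ + γ * t ^ α) / (α * δ + γ) := by
      rw [hg]; exact min_le_left _ _
    exact (le_div_iff₀ hP).mp h1
  have hgB : g t * (α * ζ + η) ≤ α * ζ + η * (1 - t ^ α) := by
    have h1 : g t ≤ (α * ζ + η * (1 - t ^ α)) / (α * ζ + η) := by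
      rw [hg]; exact min_le_right _ _
    exact (le_div_iff₀ hQ).mp h1
  have h1d : 0 ≤ 1 / (η * δ + γ * ζ + γ * η / α) := by positivity
  have hAs : 0 ≤ δ + γ / α * s ^ α :=
    add_nonneg hδ (mul_nonneg (div_nonneg hγ hα.le) hv0)
  have hBs : 0 ≤ ζ + η / α * (1 - s ^ α) :=
    add_nonneg hζ (mul_nonneg (div_nonneg hη hα.le) (by linarith))
  have e : ∀ x : ℝ, δ + γ / α * x = (α * δ + γ * x) / α := by
    intro x; field_simp
  have eB : ∀ x : ℝ, ζ + η / α * (1 - x) = (α * ζ + η * (1 - x)) / α := by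
    intro x; field_simp
  by_cases hts : t ≤ s
  · have hkey : g t * (δ + γ / α * s ^ α) ≤ δ + γ / α * t ^ α := by
      have h2 : g t * (α * δ + γ * s ^ α) ≤ α * δ + γ * t ^ α := by
        nlinarith [mul_nonneg (mul_nonneg hg0 hγ) (sub_nonneg.mpr hv1)]
      rw [e, e, ← mul_div_assoc]
      gcongr
    rw [hG t s, hG s s, if_pos hts, if_pos le_rfl]
    linarith [mul_le_mul_of_nonneg_right hkey
      (mul_nonneg h1d hBs)]
  · have hkey : g t * (ζ + η / α * (1 - s ^ α)) ≤ ζ + η / α * (1 - t ^ α) := by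
      have h2 : g t * (α * ζ + η * (1 - s ^ α)) ≤ α * ζ + η * (1 - t ^ α) := by
        nlinarith [mul_nonneg (mul_nonneg hg0 hη) hv0]
      rw [eB, eB, ← mul_div_assoc]
      gcongr
    rw [hG t s, hG s s, if_neg hts, if_pos le_rfl]
    linarith [mul_le_mul_of_nonneg_right hkey
      (mul_nonneg h1d hAs)]
end

section
/- Let 0 < α, β ≤ 1 and define the Cauchy function x(t,s) = [α t^α (t^β − s^β) + β s^β (s^α − t^α)] / (αβ(α+β)). Then x(s,s) = 0 and ∂x/∂t(t,s) = t^{α−1}(t^β − s^β)/β ≥ 0 for t ≥ s > 0; hence x(t,s) ≥ 0 for all 0 < s ≤ t ≤ 1. -/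
open Real

theorem cauchy_fn_nonneg (α β : ℝ) (hα : 0 < α) (hα1 : α ≤ 1)
    (hβ : 0 < β) (hβ1 : β ≤ 1)
    (x : ℝ → ℝ → ℝ)
    (hx : ∀ t s, x t s =
      (α * t ^ α * (t ^ β - s ^ β) + β * s ^ β * (s ^ α - t ^ α)) /
        (α * β * (α + β))) :
    (∀ s : ℝ, x s s = 0) ∧
    (∀ s t : ℝ, 0 < s → s ≤ t →
      HasDerivAt (fun τ => x τ s) (t ^ (α - 1) * (t ^ β - s ^ β) / β) t ∧
      0 ≤ t ^ (α - 1) * (t ^ β - s ^ β) / β) ∧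
    (∀ s t : ℝ, 0 < s → s ≤ t → t ≤ 1 → 0 ≤ x t s) := by
  have hab : 0 < α + β := by linarith
  refine ⟨fun s => by rw [hx]; simp, fun s t hs hst => ?_, fun s t hs hst ht1 => ?_⟩
  · have ht : 0 < t := lt_of_lt_of_le hs hst
    constructor
    · have hfe : (fun τ => x τ s) =
          fun τ => (α * τ ^ α * (τ ^ β - s ^ β) + β * s ^ β * (s ^ α - τ ^ α)) /
            (α * β * (α + β)) := funext fun τ => hx τ s
      rw [hfe]
      have h1 : HasDerivAt (fun τ : ℝ => τ ^ α) (α * t ^ (α - 1)) t :=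
        Real.hasDerivAt_rpow_const (Or.inl ht.ne')
      have h2 : HasDerivAt (fun τ : ℝ => τ ^ β) (β * t ^ (β - 1)) t :=
        Real.hasDerivAt_rpow_const (Or.inl ht.ne')
      have hA : HasDerivAt (fun τ : ℝ => α * τ ^ α) (α * (α * t ^ (α - 1))) t :=
        h1.const_mul α
      have hB : HasDerivAt (fun τ : ℝ => τ ^ β - s ^ β) (β * t ^ (β - 1)) t :=
        h2.sub_const _
      have hC : HasDerivAt (fun τ : ℝ => β * s ^ β * (s ^ α - τ ^ α))
          (β * s ^ β * (0 - α * t ^ (α - 1))) t :=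
        ((hasDerivAt_const t (s ^ α)).sub h1).const_mul _
      have hD := ((hA.mul hB).add hC).div_const (α * β * (α + β))
      convert hD using 1
      iterate 3 rfl
      have key : t ^ α * t ^ (β - 1) = t ^ (α - 1) * t ^ β := by
        rw [← Real.rpow_add ht, ← Real.rpow_add ht]; ring_nf
      have hnum : α * (α * t ^ (α - 1)) * (t ^ β - s ^ β) + α * t ^ α * (β * t ^ (β - 1))
          + β * s ^ β * (0 - α * t ^ (α - 1))
          = α * (α + β) * (t ^ (α - 1) * (t ^ β - s ^ β)) := by
        linear_combination (α * β) * key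
      rw [hnum]
      field_simp
    · apply div_nonneg _ hβ.le
      have h1 : (0:ℝ) ≤ t ^ (α - 1) := (Real.rpow_pos_of_pos ht _).le
      have h2 : s ^ β ≤ t ^ β := Real.rpow_le_rpow hs.le hst hβ.le
      nlinarith
  · have ht : 0 < t := lt_of_lt_of_le hs hst
    rw [hx]
    apply div_nonneg _ (by positivity)
    have e1 : (t ^ (α + β)) ^ (α / (α + β)) = t ^ α := by
      rw [← Real.rpow_mul ht.le]; congr 1; field_simp
    have e2 : (s ^ (α + β)) ^ (β / (α + β)) = s ^ β := by
      rw [← Real.rpow_mul hs.le]; congr 1; field_simp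
    have geom := Real.geom_mean_le_arith_mean2_weighted
      (div_nonneg hα.le hab.le) (div_nonneg hβ.le hab.le)
      (Real.rpow_nonneg ht.le (α + β)) (Real.rpow_nonneg hs.le (α + β))
      (by field_simp)
    rw [e1, e2] at geom
    have key : (α + β) * (t ^ α * s ^ β) ≤ α * t ^ (α + β) + β * s ^ (α + β) := by
      have h := mul_le_mul_of_nonneg_left geom hab.le
      have hexp : (α + β) * (α / (α + β) * t ^ (α + β) + β / (α + β) * s ^ (α + β))
          = α * t ^ (α + β) + β * s ^ (α + β) := by field_simp
      linarith [hexp ▸ h]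
    have e3 : t ^ α * t ^ β = t ^ (α + β) := (Real.rpow_add ht _ _).symm
    have e4 : s ^ β * s ^ α = s ^ (α + β) := by
      rw [← Real.rpow_add hs, add_comm]
    nlinarith [key, e3, e4]
end

section
/- Let 0 < α, β ≤ 1 and 0 < τ < 1 with τ^β > α/(α+β). Define G(t,s) by: for s ∈ [0,τ], G(t,s) = u(t,s) if t ≤ s and G(t,s) = s^{α+β}/(α(α+β)) if s ≤ t; for s ∈ [τ,1], G(t,s) = u(t,τ) if t ≤ s and G(t,s) = u(t,τ) + x(t,s) if s ≤ t, where u(t,s) = [(α+β)t^α s^β − α t^{α+β}]/(αβ(α+β)) and x(t,s) = [α t^α(t^β − s^β) + β s^β(s^α − t^α)]/(αβ(α+β)). Then 0 < G(t,s) ≤ G(τ,s) for all t ∈ (0,1] and s ∈ (0,1]. -/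
open Real

lemma key2 (a b : ℝ) (ha : 0 < a) (hb : 0 < b) {t s : ℝ} (ht : 0 < t) (hs : 0 < s) :
    (a + b) * t ^ a * s ^ b ≤ b * s ^ (a + b) + a * t ^ (a + b) := by
  rw [Real.rpow_def_of_pos ht, Real.rpow_def_of_pos hs,
      Real.rpow_def_of_pos hs, Real.rpow_def_of_pos ht]
  set P := Real.log t with hP
  set Q := Real.log s with hQ
  have h1 : a * (Q - P) + 1 ≤ Real.exp (a * (Q - P)) := Real.add_one_le_exp _
  have h2 : b * (P - Q) + 1 ≤ Real.exp (b * (P - Q)) := Real.add_one_le_exp _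
  have e1 : Real.exp (Q * (a + b)) =
      Real.exp (P * a) * Real.exp (Q * b) * Real.exp (a * (Q - P)) := by
    rw [← Real.exp_add, ← Real.exp_add]; congr 1; ring
  have e2 : Real.exp (P * (a + b)) =
      Real.exp (P * a) * Real.exp (Q * b) * Real.exp (b * (P - Q)) := by
    rw [← Real.exp_add, ← Real.exp_add]; congr 1; ring
  rw [e1, e2]
  have hE : 0 < Real.exp (P * a) * Real.exp (Q * b) :=
    mul_pos (Real.exp_pos _) (Real.exp_pos _)
  nlinarith [mul_le_mul_of_nonneg_left h1 (mul_nonneg hb.le hE.le),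
             mul_le_mul_of_nonneg_left h2 (mul_nonneg ha.le hE.le)]

set_option maxHeartbeats 1600000 in
theorem right_focal_green_bounds (α β τ : ℝ) (hα : 0 < α) (hα1 : α ≤ 1)
    (hβ : 0 < β) (hβ1 : β ≤ 1) (hτ0 : 0 < τ) (hτ1 : τ < 1)
    (hτ : α / (α + β) < τ ^ β)
    (u x G : ℝ → ℝ → ℝ)
    (hu : ∀ t s, u t s =
      ((α + β) * t ^ α * s ^ β - α * t ^ (α + β)) / (α * β * (α + β)))
    (hx : ∀ t s, x t s =
      (α * t ^ α * (t ^ β - s ^ β) + β * s ^ β * (s ^ α - t ^ α)) /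
        (α * β * (α + β)))
    (hG : ∀ t s, G t s =
      if s ≤ τ then (if t ≤ s then u t s else s ^ (α + β) / (α * (α + β)))
      else (if t ≤ s then u t τ else u t τ + x t s)) :
    ∀ t ∈ Set.Ioc (0:ℝ) 1, ∀ s ∈ Set.Ioc (0:ℝ) 1,
      0 < G t s ∧ G t s ≤ G τ s := by
  rintro t ⟨ht0, ht1⟩ s ⟨hs0, hs1⟩
  have habp : 0 < α + β := by linarith
  have hD : 0 < α * β * (α + β) := by positivity
  have hD2 : 0 < α * (α + β) := by positivity
  have hta : 0 < t ^ α := Real.rpow_pos_of_pos ht0 _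
  have htb : 0 < t ^ β := Real.rpow_pos_of_pos ht0 _
  have hsa : 0 < s ^ α := Real.rpow_pos_of_pos hs0 _
  have hsb : 0 < s ^ β := Real.rpow_pos_of_pos hs0 _
  have hτb : 0 < τ ^ β := Real.rpow_pos_of_pos hτ0 _
  have hsab : 0 < s ^ (α + β) := Real.rpow_pos_of_pos hs0 _
  have hτab : 0 < τ ^ (α + β) := Real.rpow_pos_of_pos hτ0 _
  have htα1 : t ^ α ≤ 1 := Real.rpow_le_one ht0.le ht1 hα.le
  have htβ1 : t ^ β ≤ 1 := Real.rpow_le_one ht0.le ht1 hβ.le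
  have hατ : α < (α + β) * τ ^ β := by
    rw [div_lt_iff₀ habp] at hτ; linarith
  have et : t ^ (α + β) = t ^ α * t ^ β := Real.rpow_add ht0 α β
  have es : s ^ (α + β) = s ^ α * s ^ β := Real.rpow_add hs0 α β
  have eτ : τ ^ (α + β) = τ ^ α * τ ^ β := Real.rpow_add hτ0 α β
  have huττ : u τ τ = τ ^ (α + β) / (α * (α + β)) := by
    rw [hu, eτ]
    field_simp
    ring
  by_cases hsτ : s ≤ τ
  · -- Case A : s ≤ τ
    have hGτ : G τ s = s ^ (α + β) / (α * (α + β)) := by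
      rw [hG, if_pos hsτ]
      by_cases h : τ ≤ s
      · have heq : s = τ := le_antisymm hsτ h
        rw [if_pos h, heq, huττ]
      · rw [if_neg h]
    rw [hG, if_pos hsτ, hGτ]
    by_cases hts : t ≤ s
    · rw [if_pos hts]
      have htβsβ : t ^ β ≤ s ^ β := Real.rpow_le_rpow ht0.le hts hβ.le
      have K := key2 α β hα hβ ht0 hs0
      constructor
      · rw [hu]
        apply div_pos _ hD
        nlinarith [mul_le_mul_of_nonneg_left htβsβ (mul_nonneg hα.le hta.le),
                   mul_pos (mul_pos hβ hta) hsb]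
      · rw [hu, div_le_div_iff₀ hD hD2]
        linarith [mul_le_mul_of_nonneg_right K hD2.le]
    · rw [if_neg hts]
      exact ⟨div_pos hsab hD2, le_refl _⟩
  · -- Case B : τ < s
    push_neg at hsτ
    have hτs : τ ≤ s := hsτ.le
    have hGτ : G τ s = τ ^ (α + β) / (α * (α + β)) := by
      rw [hG, if_neg (not_le.mpr hsτ), if_pos hτs, huττ]
    rw [hG, if_neg (not_le.mpr hsτ), hGτ]
    have hτβsβ : τ ^ β ≤ s ^ β := Real.rpow_le_rpow hτ0.le hτs hβ.le
    have K1 := key2 α β hα hβ ht0 hτ0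
    by_cases hts : t ≤ s
    · rw [if_pos hts]
      constructor
      · rw [hu]
        apply div_pos _ hD
        nlinarith [mul_lt_mul_of_pos_left hατ hta,
                   mul_le_mul_of_nonneg_left htβ1 (mul_nonneg hα.le hta.le)]
      · rw [hu, div_le_div_iff₀ hD hD2]
        linarith [mul_le_mul_of_nonneg_right K1 hD2.le]
    · rw [if_neg hts]
      push_neg at hts
      have hsαtα : s ^ α ≤ t ^ α := Real.rpow_le_rpow hs0.le hts.le hα.le
      have K2 := key2 β α hβ hα hτ0 hs0
      rw [add_comm β α] at K2
      have K3 := key2 β α hβ hα hs0 one_pos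
      rw [Real.one_rpow, Real.one_rpow, add_comm β α, mul_one] at K3
      constructor
      · rw [hu, hx, ← add_div]
        apply div_pos _ hD
        nlinarith [mul_le_mul_of_nonneg_left htα1
            (mul_nonneg habp.le (sub_nonneg.mpr hτβsβ))]
      · rw [hu, hx, ← add_div, div_le_div_iff₀ hD hD2]
        have hstep : (α + β) * (s ^ β - τ ^ β) * (t ^ α - s ^ α) ≥ 0 :=
          mul_nonneg (mul_nonneg habp.le (sub_nonneg.mpr hτβsβ))
            (sub_nonneg.mpr hsαtα)
        have hN : (α + β) * t ^ α * τ ^ β - α * t ^ (α + β) +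
            (α * t ^ α * (t ^ β - s ^ β) + β * s ^ β * (s ^ α - t ^ α)) ≤
            β * τ ^ (α + β) := by
          nlinarith [hstep, K2]
        linarith [mul_le_mul_of_nonneg_right hN hD2.le]
end

section
/- Let 0 < α, β ≤ 1, 0 < τ < 1 with τ^β > α/(α+β), and let G(t,s) be the right-focal Green's function as defined from u(t,s) = [(α+β)t^α s^β − α t^{α+β}]/(αβ(α+β)) and x(t,s) = [α t^α(t^β − s^β) + β s^β(s^α − t^α)]/(αβ(α+β)). Define g(t) := min{ (t^α/(β τ^{α+β}))[(α+β)τ^β − α t^β], (1−t)/(1−τ) }. Then g(t)·G(τ,s) ≤ G(t,s) ≤ G(τ,s) for all t, s ∈ [0,1]. -/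
open Real

lemma rf_key (α β : ℝ) (hα : 0 < α) (hβ : 0 < β) {a b : ℝ} (ha : 0 ≤ a) (hb : 0 ≤ b) :
    (α + β) * (a ^ α * b ^ β) ≤ α * (a ^ α * a ^ β) + β * (b ^ α * b ^ β) := by
  have hab : (0:ℝ) < α + β := by linarith
  have h1 : a ^ α * a ^ β = a ^ (α + β) := (Real.rpow_add' ha hab.ne').symm
  have h2 : b ^ α * b ^ β = b ^ (α + β) := (Real.rpow_add' hb hab.ne').symm
  have hgm := Real.geom_mean_le_arith_mean2_weighted
    (div_nonneg hα.le hab.le) (div_nonneg hβ.le hab.le)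
    (Real.rpow_nonneg ha (α + β)) (Real.rpow_nonneg hb (α + β))
    (by rw [← add_div, div_self hab.ne'])
  have e1 : (a ^ (α + β)) ^ (α / (α + β)) = a ^ α := by
    rw [← Real.rpow_mul ha]; congr 1; field_simp
  have e2 : (b ^ (α + β)) ^ (β / (α + β)) = b ^ β := by
    rw [← Real.rpow_mul hb]; congr 1; field_simp
  rw [e1, e2] at hgm
  rw [div_mul_eq_mul_div, div_mul_eq_mul_div, ← add_div, le_div_iff₀ hab] at hgm
  rw [h1, h2]
  nlinarith [hgm]

set_option maxHeartbeats 1000000 in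
theorem right_focal_green_lower (α β τ : ℝ) (hα : 0 < α) (hα1 : α ≤ 1)
    (hβ : 0 < β) (hβ1 : β ≤ 1) (hτ0 : 0 < τ) (hτ1 : τ < 1)
    (hτ : α / (α + β) < τ ^ β)
    (u x G : ℝ → ℝ → ℝ)
    (hu : ∀ t s, u t s =
      ((α + β) * t ^ α * s ^ β - α * t ^ (α + β)) / (α * β * (α + β)))
    (hx : ∀ t s, x t s =
      (α * t ^ α * (t ^ β - s ^ β) + β * s ^ β * (s ^ α - t ^ α)) /
        (α * β * (α + β)))
    (hG : ∀ t s, G t s =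
      if s ≤ τ then (if t ≤ s then u t s else s ^ (α + β) / (α * (α + β)))
      else (if t ≤ s then u t τ else u t τ + x t s))
    (g : ℝ → ℝ)
    (hg : ∀ t, g t = min
      ((t ^ α / (β * τ ^ (α + β))) * ((α + β) * τ ^ β - α * t ^ β))
      ((1 - t) / (1 - τ))) :
    ∀ t ∈ Set.Icc (0:ℝ) 1, ∀ s ∈ Set.Icc (0:ℝ) 1,
      g t * G τ s ≤ G t s ∧ G t s ≤ G τ s := by
  have hab : (0:ℝ) < α + β := by linarith
  have habne : α + β ≠ 0 := hab.ne'
  intro t ht s hs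
  obtain ⟨ht0, ht1⟩ := ht
  obtain ⟨hs0, hs1⟩ := hs
  have hτ0' : (0:ℝ) ≤ τ := hτ0.le
  have hX : 0 ≤ t ^ α := Real.rpow_nonneg ht0 α
  have hY : 0 ≤ t ^ β := Real.rpow_nonneg ht0 β
  have hSa : 0 ≤ s ^ α := Real.rpow_nonneg hs0 α
  have hSb : 0 ≤ s ^ β := Real.rpow_nonneg hs0 β
  have hTa : 0 < τ ^ α := Real.rpow_pos_of_pos hτ0 α
  have hTb : 0 < τ ^ β := Real.rpow_pos_of_pos hτ0 β
  have hτab : τ ^ (α + β) = τ ^ α * τ ^ β := Real.rpow_add' hτ0' habne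
  have hsab : s ^ (α + β) = s ^ α * s ^ β := Real.rpow_add' hs0 habne
  have htab : t ^ (α + β) = t ^ α * t ^ β := Real.rpow_add' ht0 habne
  have keyts := rf_key α β hα hβ ht0 hs0
  have keytτ := rf_key α β hα hβ ht0 hτ0'
  have keysτ := rf_key α β hα hβ hs0 hτ0'
  have hg1 : g t ≤ (t ^ α / (β * τ ^ (α + β))) * ((α + β) * τ ^ β - α * t ^ β) := by
    rw [hg]; exact min_le_left _ _
  have hg1le1 : g t ≤ 1 := by
    refine hg1.trans ?_
    rw [div_mul_eq_mul_div, div_le_one (by rw [hτab]; positivity), hτab]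
    nlinarith [keytτ, mul_nonneg hX hY, hα]
  by_cases hsτ : s ≤ τ
  · -- G τ s = s^(α+β)/(α(α+β))
    have hGτs : G τ s = s ^ (α + β) / (α * (α + β)) := by
      rw [hG]
      rw [if_pos hsτ]
      by_cases h : τ ≤ s
      · rw [if_pos h]
        have hst : s = τ := le_antisymm hsτ h
        subst hst
        rw [hu, hsab]
        field_simp
        ring
      · rw [if_neg h]
    have hGτnn : 0 ≤ G τ s := by rw [hGτs, hsab]; positivity
    by_cases hts : t ≤ s
    · -- A1
      have hGt : G t s = ((α + β) * t ^ α * s ^ β - α * t ^ (α + β)) / (α * β * (α + β)) := by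
        rw [hG, if_pos hsτ, if_pos hts, hu]
      have hYS : t ^ β ≤ s ^ β := Real.rpow_le_rpow ht0 hts hβ.le
      have hST : s ^ α * s ^ β ≤ τ ^ α * τ ^ β :=
        mul_le_mul (Real.rpow_le_rpow hs0 hsτ hα.le) (Real.rpow_le_rpow hs0 hsτ hβ.le) hSb hTa.le
      constructor
      · -- lower
        refine le_trans (mul_le_mul_of_nonneg_right hg1 hGτnn) ?_
        rw [hGτs, hGt, hτab, hsab, htab]
        rw [div_mul_eq_mul_div, div_mul_div_comm, div_le_div_iff₀ (by positivity) (by positivity)]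
        have h2 : α * (t ^ β * (τ ^ α * τ ^ β - s ^ α * s ^ β))
            ≤ α * (s ^ β * (τ ^ α * τ ^ β - s ^ α * s ^ β)) :=
          mul_le_mul_of_nonneg_left
            (mul_le_mul_of_nonneg_right hYS (sub_nonneg.2 hST)) hα.le
        have h1 : 0 ≤ s ^ β * (α * (s ^ α * s ^ β) + β * (τ ^ α * τ ^ β)
            - (α + β) * (s ^ α * τ ^ β)) :=
          mul_nonneg hSb (by linarith [keysτ])
        have hinner : 0 ≤ (α + β) * (s ^ β * (τ ^ α * τ ^ β) - τ ^ β * (s ^ α * s ^ β))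
            - α * t ^ β * (τ ^ α * τ ^ β - s ^ α * s ^ β) := by linarith [h1, h2]
        linarith [mul_nonneg (mul_nonneg (mul_nonneg hα.le hβ.le) hab.le)
          (mul_nonneg hX hinner)]
      · -- upper
        rw [hGt, hGτs, htab, hsab, div_le_div_iff₀ (by positivity) (by positivity)]
        have d : 0 ≤ α * (t ^ α * t ^ β) + β * (s ^ α * s ^ β)
            - (α + β) * (t ^ α * s ^ β) := by linarith [keyts]
        linarith [mul_nonneg (by positivity : (0:ℝ) ≤ α * (α + β)) d]
    · -- A2
      have hGt : G t s = s ^ (α + β) / (α * (α + β)) := by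
        rw [hG, if_pos hsτ, if_neg hts]
      constructor
      · rw [hGt]
        calc g t * G τ s ≤ 1 * G τ s := mul_le_mul_of_nonneg_right hg1le1 hGτnn
          _ = G τ s := one_mul _
          _ = s ^ (α + β) / (α * (α + β)) := hGτs
      · rw [hGt, hGτs]
  · -- s > τ : G τ s = τ^(α+β)/(α(α+β))
    have hτs : τ ≤ s := (not_le.1 hsτ).le
    have hGτs : G τ s = τ ^ (α + β) / (α * (α + β)) := by
      rw [hG, if_neg hsτ, if_pos hτs, hu, hτab]
      field_simp
      ring
    have hGτnn : 0 ≤ G τ s := by rw [hGτs, hτab]; positivity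
    have hgGeq : (t ^ α / (β * τ ^ (α + β))) * ((α + β) * τ ^ β - α * t ^ β) * G τ s
        = ((α + β) * t ^ α * τ ^ β - α * t ^ (α + β)) / (α * β * (α + β)) := by
      rw [hGτs, hτab, htab]
      field_simp
    have hlow : g t * G τ s ≤ ((α + β) * t ^ α * τ ^ β - α * t ^ (α + β)) / (α * β * (α + β)) := by
      rw [← hgGeq]
      exact mul_le_mul_of_nonneg_right hg1 hGτnn
    by_cases hts : t ≤ s
    · -- B1
      have hGt : G t s = ((α + β) * t ^ α * τ ^ β - α * t ^ (α + β)) / (α * β * (α + β)) := by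
        rw [hG, if_neg hsτ, if_pos hts, hu]
      refine ⟨by rw [hGt]; exact hlow, ?_⟩
      rw [hGt, hGτs, htab, hτab, div_le_div_iff₀ (by positivity) (by positivity)]
      have d : 0 ≤ α * (t ^ α * t ^ β) + β * (τ ^ α * τ ^ β)
          - (α + β) * (t ^ α * τ ^ β) := by linarith [keytτ]
      linarith [mul_nonneg (by positivity : (0:ℝ) ≤ α * (α + β)) d]
    · -- B2 : τ ≤ s < t
      have hst : s ≤ t := (not_le.1 hts).le
      have hGt : G t s = u t τ + x t s := by
        rw [hG, if_neg hsτ, if_neg hts]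
      have hxnn : 0 ≤ x t s := by
        rw [hx]
        apply div_nonneg _ (by positivity)
        linarith [keyts]
      constructor
      · rw [hGt, hu]
        linarith [hlow, hxnn]
      · rw [hGt, hu, hx, ← add_div, hGτs, hτab, htab,
          div_le_div_iff₀ (by positivity) (by positivity)]
        have hXS : s ^ α ≤ t ^ α := Real.rpow_le_rpow hs0 hst hα.le
        have hTS : τ ^ β ≤ s ^ β := Real.rpow_le_rpow hτ0' hτs hβ.le
        have f1 : s ^ α * (s ^ β - τ ^ β) ≤ t ^ α * (s ^ β - τ ^ β) :=
          mul_le_mul_of_nonneg_right hXS (sub_nonneg.2 hTS)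
        have hcomb : 0 ≤ β * (τ ^ α * τ ^ β) + (α + β) * (t ^ α * s ^ β)
            - (α + β) * (t ^ α * τ ^ β) - β * (s ^ α * s ^ β) := by
          linarith [keysτ, mul_le_mul_of_nonneg_left f1 hab.le]
        linarith [mul_nonneg (by positivity : (0:ℝ) ≤ α * (α + β)) hcomb]
end

section
/- Let 0 < α, β, γ ≤ 1 and define G(t,s) on [0,1]² by G(t,s) = (t^{α+β}/γ)[ s^γ/(β(α+β)) − t^γ/((β+γ)(α+β+γ)) ] for t ≤ s and G(t,s) = (s^{β+γ}/α)[ t^α/(β(β+γ)) − s^α/((α+β)(α+β+γ)) ] for s ≤ t. Then for each fixed s ∈ [0,1], the function t ↦ G(t,s) is monotone nondecreasing on [0,1], and hence 0 ≤ G(t,s) ≤ G(1,s) for all t, s ∈ [0,1]. -/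
open Real

/-- Auxiliary: `t ↦ A * t^p - B * t^q` is monotone on `[0,s]` provided the
derivative is nonnegative on `(0,s)`. -/
lemma cantilever_aux_mono (A B p q s : ℝ) (hp : 0 < p) (hq : 0 < q)
    (hderiv : ∀ x ∈ Set.Ioo (0:ℝ) s, 0 ≤ A * (p * x ^ (p - 1)) - B * (q * x ^ (q - 1))) :
    MonotoneOn (fun t : ℝ => A * t ^ p - B * t ^ q) (Set.Icc 0 s) := by
  have hcont : ContinuousOn (fun t : ℝ => A * t ^ p - B * t ^ q) (Set.Icc 0 s) := by
    apply ContinuousOn.sub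
    · exact (continuous_const.mul (continuous_iff_continuousAt.mpr fun x =>
        Real.continuousAt_rpow_const x p (Or.inr hp.le))).continuousOn
    · exact (continuous_const.mul (continuous_iff_continuousAt.mpr fun x =>
        Real.continuousAt_rpow_const x q (Or.inr hq.le))).continuousOn
  have hd : ∀ x ∈ Set.Ioo (0:ℝ) s,
      HasDerivAt (fun t : ℝ => A * t ^ p - B * t ^ q)
        (A * (p * x ^ (p - 1)) - B * (q * x ^ (q - 1))) x := by
    intro x hx
    exact ((Real.hasDerivAt_rpow_const (Or.inl hx.1.ne')).const_mul A).sub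
      ((Real.hasDerivAt_rpow_const (Or.inl hx.1.ne')).const_mul B)
  apply monotoneOn_of_deriv_nonneg (convex_Icc 0 s) hcont
  · rw [interior_Icc]
    exact fun x hx => ((hd x hx).differentiableAt).differentiableWithinAt
  · rw [interior_Icc]
    intro x hx
    rw [(hd x hx).deriv]
    exact hderiv x hx

theorem cantilever_green_monotone (α β γ : ℝ) (hα : 0 < α) (hα1 : α ≤ 1)
    (hβ : 0 < β) (hβ1 : β ≤ 1) (hγ : 0 < γ) (hγ1 : γ ≤ 1)
    (G : ℝ → ℝ → ℝ)
    (hG : ∀ t s, G t s =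
      if t ≤ s then
        (t ^ (α + β) / γ) *
          (s ^ γ / (β * (α + β)) - t ^ γ / ((β + γ) * (α + β + γ)))
      else
        (s ^ (β + γ) / α) *
          (t ^ α / (β * (β + γ)) - s ^ α / ((α + β) * (α + β + γ)))) :
    (∀ s ∈ Set.Icc (0:ℝ) 1, MonotoneOn (fun t => G t s) (Set.Icc 0 1)) ∧
    (∀ t ∈ Set.Icc (0:ℝ) 1, ∀ s ∈ Set.Icc (0:ℝ) 1,
      0 ≤ G t s ∧ G t s ≤ G 1 s) := by
  have hab : (0:ℝ) < α + β := by linarith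
  have hbc : (0:ℝ) < β + γ := by linarith
  have habc : (0:ℝ) < α + β + γ := by linarith
  have key : ∀ s ∈ Set.Icc (0:ℝ) 1, MonotoneOn (fun t => G t s) (Set.Icc 0 1) := by
    intro s hs
    obtain ⟨hs0, hs1⟩ := hs
    set A := s ^ γ / (γ * (β * (α + β))) with hA
    set B := 1 / (γ * ((β + γ) * (α + β + γ))) with hB
    -- the first branch as a nice function
    have hG1 : ∀ t : ℝ, 0 ≤ t → t ≤ s →
        G t s = A * t ^ (α + β) - B * t ^ (α + β + γ) := by
      intro t ht hts
      rw [hG, if_pos hts]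
      have hsplit : t ^ (α + β + γ) = t ^ (α + β) * t ^ γ :=
        Real.rpow_add' ht (by positivity)
      rw [hsplit, hA, hB]
      field_simp
    -- monotonicity of the first branch on [0, s]
    have hmono1 : MonotoneOn (fun t : ℝ => A * t ^ (α + β) - B * t ^ (α + β + γ))
        (Set.Icc 0 s) := by
      apply cantilever_aux_mono A B (α + β) (α + β + γ) s hab habc
      intro x hx
      obtain ⟨hx0, hxs⟩ := hx
      have hxg : x ^ (α + β + γ - 1) = x ^ (α + β - 1) * x ^ γ := by
        rw [← Real.rpow_add hx0]; ring_nf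
      have hxγ : x ^ γ ≤ s ^ γ := Real.rpow_le_rpow hx0.le hxs.le hγ.le
      have hsγ : (0:ℝ) ≤ s ^ γ := Real.rpow_nonneg hs0 γ
      have hxp : (0:ℝ) ≤ x ^ (α + β - 1) := Real.rpow_nonneg hx0.le _
      have key2 : A * (α + β) - B * (α + β + γ) * x ^ γ ≥ 0 := by
        have hAe : A * (α + β) = s ^ γ / (γ * β) := by
          rw [hA]; field_simp
        have hBe : B * (α + β + γ) = 1 / (γ * (β + γ)) := by
          rw [hB]; field_simp
        rw [ge_iff_le, sub_nonneg, hAe, hBe]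
        have h1 : 1 / (γ * (β + γ)) * x ^ γ ≤ 1 / (γ * (β + γ)) * s ^ γ :=
          mul_le_mul_of_nonneg_left hxγ (by positivity)
        have h2 : 1 / (γ * (β + γ)) * s ^ γ ≤ 1 / (γ * β) * s ^ γ := by
          apply mul_le_mul_of_nonneg_right _ hsγ
          apply one_div_le_one_div_of_le (by positivity)
          nlinarith
        calc 1 / (γ * (β + γ)) * x ^ γ ≤ 1 / (γ * β) * s ^ γ := le_trans h1 h2
          _ = s ^ γ / (γ * β) := by ring
      have : A * ((α + β) * x ^ (α + β - 1)) - B * ((α + β + γ) * x ^ (α + β + γ - 1))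
          = x ^ (α + β - 1) * (A * (α + β) - B * (α + β + γ) * x ^ γ) := by
        rw [hxg]; ring
      rw [this]
      exact mul_nonneg hxp key2
    -- gluing: value of the branches agrees at t = s
    have hglue : A * s ^ (α + β) - B * s ^ (α + β + γ)
        = (s ^ (β + γ) / α) *
          (s ^ α / (β * (β + γ)) - s ^ α / ((α + β) * (α + β + γ))) := by
      rcases eq_or_lt_of_le hs0 with h0 | h0
      · rw [← h0]
        rw [Real.zero_rpow hab.ne', Real.zero_rpow habc.ne', Real.zero_rpow hbc.ne']
        ring
      · have e1 : s ^ (α + β) = s ^ α * s ^ β := Real.rpow_add h0 _ _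
        have e2 : s ^ (α + β + γ) = s ^ α * s ^ β * s ^ γ := by
          rw [Real.rpow_add h0 (α + β) γ, Real.rpow_add h0 α β]
        have e3 : s ^ (β + γ) = s ^ β * s ^ γ := Real.rpow_add h0 _ _
        rw [e1, e2, e3, hA, hB]
        field_simp
        ring
    -- monotonicity of the second branch (as inequality)
    have hmono2 : ∀ a b : ℝ, 0 ≤ a → a ≤ b →
        (s ^ (β + γ) / α) * (a ^ α / (β * (β + γ)) - s ^ α / ((α + β) * (α + β + γ)))
        ≤ (s ^ (β + γ) / α) * (b ^ α / (β * (β + γ)) - s ^ α / ((α + β) * (α + β + γ))) := by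
      intro a b ha hab'
      have hs' : (0:ℝ) ≤ s ^ (β + γ) / α := by positivity
      apply mul_le_mul_of_nonneg_left _ hs'
      apply sub_le_sub_right
      apply div_le_div_of_nonneg_right (Real.rpow_le_rpow ha hab' hα.le) (by positivity)
    -- now prove MonotoneOn
    intro a ha b hb hab'
    simp only
    by_cases hbs : b ≤ s
    · have has : a ≤ s := le_trans hab' hbs
      rw [hG1 a ha.1 has, hG1 b hb.1 hbs]
      exact hmono1 ⟨ha.1, has⟩ ⟨hb.1, hbs⟩ hab'
    · push_neg at hbs
      by_cases has : a ≤ s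
      · have h1 : G a s ≤ A * s ^ (α + β) - B * s ^ (α + β + γ) := by
          rw [hG1 a ha.1 has]
          exact hmono1 ⟨ha.1, has⟩ ⟨hs0, le_refl s⟩ has
        have h2 : G b s = (s ^ (β + γ) / α) *
            (b ^ α / (β * (β + γ)) - s ^ α / ((α + β) * (α + β + γ))) := by
          rw [hG, if_neg (not_le.mpr hbs)]
        rw [h2]
        calc G a s ≤ A * s ^ (α + β) - B * s ^ (α + β + γ) := h1
          _ = (s ^ (β + γ) / α) *
              (s ^ α / (β * (β + γ)) - s ^ α / ((α + β) * (α + β + γ))) := hglue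
          _ ≤ (s ^ (β + γ) / α) *
              (b ^ α / (β * (β + γ)) - s ^ α / ((α + β) * (α + β + γ))) :=
            hmono2 s b hs0 hbs.le
      · push_neg at has
        rw [hG, hG, if_neg (not_le.mpr has), if_neg (not_le.mpr hbs)]
        exact hmono2 a b ha.1 hab'
  refine ⟨key, ?_⟩
  intro t ht s hs
  have h0 : G 0 s = 0 := by
    rw [hG, if_pos hs.1, Real.zero_rpow hab.ne']
    ring
  constructor
  · have := key s hs (Set.mem_Icc.mpr ⟨le_refl 0, zero_le_one⟩) ht ht.1
    simpa [h0] using this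
  · exact key s hs ht (Set.mem_Icc.mpr ⟨zero_le_one, le_refl 1⟩) ht.2
end

section
/- Let 0 < α, β ≤ 1 and define u(t,s) = (t^α / (αβ(α+β)(2α+β)))·[2α s^α(1 − s^β) − β(1 − s^α)(t^{α+β} + s^{α+β})]. Then for 0 ≤ t ≤ s ≤ 1, u(t,s) ≥ (2 s^α t^α / (αβ(α+β)(2α+β)))·[α(1 − s^β) − β(1 − s^α)s^β], and the bracketed quantity is positive for s ∈ [0,1); hence u(t,s) ≥ 0 for 0 ≤ t ≤ s ≤ 1. -/
open Real

/-- Key positivity: for `0 ≤ s < 1`, `0 < α*(1-s^β) - β*(1-s^α)*s^β`. -/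
lemma lidstone_key (α β s : ℝ) (hα : 0 < α) (hβ : 0 < β) (hs : 0 ≤ s) (hs1 : s < 1) :
    0 < α * (1 - s ^ β) - β * (1 - s ^ α) * s ^ β := by
  rcases eq_or_lt_of_le hs with rfl | hs0
  · rw [Real.zero_rpow hβ.ne', Real.zero_rpow hα.ne']
    simpa using hα
  · have hab : 0 < α + β := by linarith
    set y := s ^ (α + β) with hy
    have hy0 : 0 ≤ y := Real.rpow_nonneg hs _
    have hy1 : y < 1 := Real.rpow_lt_one hs hs1 hab
    have hx : -1 ≤ y - 1 := by linarith
    have hx' : y - 1 ≠ 0 := by intro h; nlinarith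
    have hp1 : 0 < β / (α + β) := div_pos hβ hab
    have hp2 : β / (α + β) < 1 := (div_lt_one hab).2 (by linarith)
    have hB := rpow_one_add_lt_one_add_mul_self hx hx' hp1 hp2
    rw [show (1 : ℝ) + (y - 1) = y by ring] at hB
    have hsb : s ^ β = y ^ (β / (α + β)) := by
      rw [hy, ← Real.rpow_mul hs]
      congr 1
      field_simp
    have hyeq : y = s ^ α * s ^ β := by
      rw [hy, Real.rpow_add hs0]
    have hb : (α + β) * s ^ β < α + β * y := by
      rw [hsb]
      have := mul_lt_mul_of_pos_left hB hab
      calc (α + β) * y ^ (β / (α + β)) < (α + β) * (1 + β / (α + β) * (y - 1)) := this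
        _ = α + β * y := by field_simp; ring
    nlinarith [hb, hyeq]

theorem lidstone_u_lower (α β : ℝ) (hα : 0 < α) (hα1 : α ≤ 1)
    (hβ : 0 < β) (hβ1 : β ≤ 1)
    (u : ℝ → ℝ → ℝ)
    (hu : ∀ t s, u t s =
      (t ^ α / (α * β * (α + β) * (2 * α + β))) *
        (2 * α * s ^ α * (1 - s ^ β) -
          β * (1 - s ^ α) * (t ^ (α + β) + s ^ (α + β)))) :
    (∀ t s : ℝ, 0 ≤ t → t ≤ s → s ≤ 1 →
      (2 * s ^ α * t ^ α / (α * β * (α + β) * (2 * α + β))) *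
        (α * (1 - s ^ β) - β * (1 - s ^ α) * s ^ β) ≤ u t s) ∧
    (∀ s : ℝ, 0 ≤ s → s < 1 →
      0 < α * (1 - s ^ β) - β * (1 - s ^ α) * s ^ β) ∧
    (∀ t s : ℝ, 0 ≤ t → t ≤ s → s ≤ 1 → 0 ≤ u t s) := by
  have hab : 0 < α + β := by linarith
  have hC : 0 < α * β * (α + β) * (2 * α + β) := by positivity
  -- part 1
  have h1 : ∀ t s : ℝ, 0 ≤ t → t ≤ s → s ≤ 1 →
      (2 * s ^ α * t ^ α / (α * β * (α + β) * (2 * α + β))) *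
        (α * (1 - s ^ β) - β * (1 - s ^ α) * s ^ β) ≤ u t s := by
    intro t s ht hts hs1
    have hs : 0 ≤ s := le_trans ht hts
    rcases eq_or_lt_of_le hs with rfl | hs0
    · -- s = 0, hence t = 0
      have ht0 : t = 0 := le_antisymm hts ht
      subst ht0
      rw [hu]
      rw [Real.zero_rpow hα.ne', Real.zero_rpow hab.ne']
      simp
    · have hsa1 : s ^ α ≤ 1 := Real.rpow_le_one hs hs1 hα.le
      have htab : t ^ (α + β) ≤ s ^ (α + β) :=
        Real.rpow_le_rpow ht hts hab.le
      have hseq : s ^ (α + β) = s ^ α * s ^ β := Real.rpow_add hs0 _ _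
      have hta : 0 ≤ t ^ α := Real.rpow_nonneg ht _
      have hbr : β * (1 - s ^ α) * (t ^ (α + β) + s ^ (α + β)) ≤
          β * (1 - s ^ α) * (2 * (s ^ α * s ^ β)) := by
        apply mul_le_mul_of_nonneg_left _ (by nlinarith : (0:ℝ) ≤ β * (1 - s ^ α))
        rw [← hseq]; linarith
      rw [hu]
      have key : (2 * s ^ α * t ^ α / (α * β * (α + β) * (2 * α + β))) *
          (α * (1 - s ^ β) - β * (1 - s ^ α) * s ^ β) =
          (t ^ α / (α * β * (α + β) * (2 * α + β))) *
          (2 * α * s ^ α * (1 - s ^ β) - β * (1 - s ^ α) * (2 * (s ^ α * s ^ β))) := by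
        ring
      rw [key]
      apply mul_le_mul_of_nonneg_left _ (div_nonneg hta hC.le)
      linarith
  refine ⟨h1, fun s hs hs1 => lidstone_key α β s hα hβ hs hs1, ?_⟩
  -- part 3
  intro t s ht hts hs1
  have hs : 0 ≤ s := le_trans ht hts
  have hg : 0 ≤ α * (1 - s ^ β) - β * (1 - s ^ α) * s ^ β := by
    rcases eq_or_lt_of_le hs1 with rfl | hlt
    · rw [Real.one_rpow, Real.one_rpow]; ring_nf; simp
    · exact (lidstone_key α β s hα hβ hs hlt).le
  have hfac : 0 ≤ 2 * s ^ α * t ^ α / (α * β * (α + β) * (2 * α + β)) := by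
    apply div_nonneg _ hC.le
    have := Real.rpow_nonneg hs α
    have := Real.rpow_nonneg ht α
    positivity
  exact le_trans (mul_nonneg hfac hg) (h1 t s ht hts hs1)
end

section
/- Let 0 < α ≤ 1, let h : [0,1] → ℝ be continuous, and define G(t,s) = (1/α)t^α(1 − s^α) for t ≤ s and (1/α)s^α(1 − t^α) for s ≤ t. Let β ∈ (0,1] and x(t) := ∫₀¹ G(t,s) h(s) s^{β−1} ds. Then x(0) = x(1) = 0 and for t ∈ (0,1), t^{1−β} · d/dt ( t^{1−α} x'(t) ) = −h(t). -/
open Real MeasureTheory intervalIntegral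

theorem conjugate_bvp_solution (α β : ℝ) (hα : 0 < α) (hα1 : α ≤ 1)
    (hβ : 0 < β) (hβ1 : β ≤ 1)
    (h : ℝ → ℝ) (hcont : ContinuousOn h (Set.Icc 0 1))
    (G : ℝ → ℝ → ℝ)
    (hG : ∀ t s, G t s =
      if t ≤ s then (1 / α) * t ^ α * (1 - s ^ α)
      else (1 / α) * s ^ α * (1 - t ^ α))
    (x : ℝ → ℝ)
    (hx : ∀ t, x t = ∫ s in (0:ℝ)..1, G t s * h s * s ^ (β - 1)) :
    x 0 = 0 ∧ x 1 = 0 ∧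
    ∀ t ∈ Set.Ioo (0:ℝ) 1,
      t ^ (1 - β) * deriv (fun τ => τ ^ (1 - α) * deriv x τ) t = -h t := by
  have hα' : α ≠ 0 := ne_of_gt hα
  set A : ℝ → ℝ := fun t => ∫ s in (0:ℝ)..t, s ^ (α + β - 1) * h s with hA_def
  set B : ℝ → ℝ := fun t => ∫ s in t..(1:ℝ), (1 - s ^ α) * (s ^ (β - 1) * h s) with hB_def
  -- integrability of the two kernel integrands
  have IA : ∀ u v : ℝ, u ∈ Set.Icc (0:ℝ) 1 → v ∈ Set.Icc (0:ℝ) 1 →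
      IntervalIntegrable (fun s => s ^ (α + β - 1) * h s) volume u v := by
    intro u v hu hv
    exact (intervalIntegrable_rpow' (by linarith)).mul_continuousOn
      (hcont.mono (Set.uIcc_subset_Icc hu hv))
  have hcα : Continuous fun s : ℝ => s ^ α := by
    rw [continuous_iff_continuousAt]
    intro s
    exact Real.continuousAt_rpow_const s α (Or.inr hα.le)
  have IB : ∀ u v : ℝ, u ∈ Set.Icc (0:ℝ) 1 → v ∈ Set.Icc (0:ℝ) 1 →
      IntervalIntegrable (fun s => (1 - s ^ α) * (s ^ (β - 1) * h s)) volume u v := by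
    intro u v hu hv
    exact ((intervalIntegrable_rpow' (by linarith)).mul_continuousOn
      (hcont.mono (Set.uIcc_subset_Icc hu hv))).continuousOn_mul
      ((continuous_const.sub hcα).continuousOn)
  -- the splitting formula
  have key : ∀ t ∈ Set.Icc (0:ℝ) 1,
      x t = (1/α) * (1 - t^α) * A t + (1/α) * t^α * B t := by
    intro t ht
    obtain ⟨ht0, ht1⟩ := ht
    have e1 : ∀ s ∈ Set.uIoc (0:ℝ) t, G t s * h s * s ^ (β - 1)
        = (1/α) * (1 - t^α) * (s ^ (α + β - 1) * h s) := by
      intro s hs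
      rw [Set.uIoc_of_le ht0] at hs
      obtain ⟨hs0, hst⟩ := hs
      have hGts : G t s = (1/α) * s^α * (1 - t^α) := by
        rw [hG]
        rcases lt_or_eq_of_le hst with hlt | heq
        · rw [if_neg (not_le.mpr hlt)]
        · rw [heq, if_pos le_rfl]
      have hpow : s ^ (α + β - 1) = s ^ α * s ^ (β - 1) := by
        rw [← Real.rpow_add hs0]; ring_nf
      rw [hGts, hpow]; ring
    have e2 : ∀ s ∈ Set.uIoc t (1:ℝ), G t s * h s * s ^ (β - 1)
        = (1/α) * t^α * ((1 - s^α) * (s ^ (β - 1) * h s)) := by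
      intro s hs
      rw [Set.uIoc_of_le ht1] at hs
      rw [hG, if_pos hs.1.le]; ring
    have ht' : t ∈ Set.Icc (0:ℝ) 1 := ⟨ht0, ht1⟩
    have h01 : (0:ℝ) ∈ Set.Icc (0:ℝ) 1 := by norm_num
    have h11 : (1:ℝ) ∈ Set.Icc (0:ℝ) 1 := by norm_num
    have J1 : IntervalIntegrable (fun s => G t s * h s * s ^ (β - 1)) volume 0 t := by
      refine ((IA 0 t h01 ht').const_mul ((1/α) * (1 - t^α))).congr ?_
      exact fun s hs => (e1 s hs).symm
    have J2 : IntervalIntegrable (fun s => G t s * h s * s ^ (β - 1)) volume t 1 := by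
      refine ((IB t 1 ht' h11).const_mul ((1/α) * t^α)).congr ?_
      exact fun s hs => (e2 s hs).symm
    rw [hx, ← intervalIntegral.integral_add_adjacent_intervals J1 J2]
    congr 1
    · rw [intervalIntegral.integral_congr_ae (Filter.Eventually.of_forall e1),
        intervalIntegral.integral_const_mul]
    · rw [intervalIntegral.integral_congr_ae (Filter.Eventually.of_forall e2),
        intervalIntegral.integral_const_mul]
  have x0 : x 0 = 0 := by
    have := key 0 (by norm_num)
    simp only [hA_def] at this
    rw [this, intervalIntegral.integral_same, Real.zero_rpow hα']
    ring
  have x1 : x 1 = 0 := by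
    have := key 1 (by norm_num)
    simp only [hB_def] at this
    rw [this, intervalIntegral.integral_same, Real.one_rpow]
    ring
  -- derivatives of A and B on (0,1)
  have hfc : ContinuousOn (fun s : ℝ => s ^ (α + β - 1) * h s) (Set.Ioo 0 1) := by
    intro u hu
    exact ((Real.continuousAt_rpow_const u _ (Or.inl hu.1.ne')).mul
      (hcont.continuousAt (Icc_mem_nhds hu.1 hu.2))).continuousWithinAt
  have hgc : ContinuousOn (fun s : ℝ => (1 - s ^ α) * (s ^ (β - 1) * h s)) (Set.Ioo 0 1) := by
    intro u hu
    exact ((continuous_const.sub hcα).continuousAt.mul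
      ((Real.continuousAt_rpow_const u _ (Or.inl hu.1.ne')).mul
        (hcont.continuousAt (Icc_mem_nhds hu.1 hu.2)))).continuousWithinAt
  have hAd : ∀ t ∈ Set.Ioo (0:ℝ) 1, HasDerivAt A (t ^ (α + β - 1) * h t) t := by
    intro t ht
    exact intervalIntegral.integral_hasDerivAt_right
      (IA 0 t (by norm_num) ⟨ht.1.le, ht.2.le⟩)
      (hfc.stronglyMeasurableAtFilter isOpen_Ioo t ht)
      ((Real.continuousAt_rpow_const t _ (Or.inl ht.1.ne')).mul
        (hcont.continuousAt (Icc_mem_nhds ht.1 ht.2)))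
  have hBd : ∀ t ∈ Set.Ioo (0:ℝ) 1,
      HasDerivAt B (-((1 - t^α) * (t ^ (β - 1) * h t))) t := by
    intro t ht
    exact intervalIntegral.integral_hasDerivAt_left
      (IB t 1 ⟨ht.1.le, ht.2.le⟩ (by norm_num))
      (hgc.stronglyMeasurableAtFilter isOpen_Ioo t ht)
      ((continuous_const.sub hcα).continuousAt.mul
        ((Real.continuousAt_rpow_const t _ (Or.inl ht.1.ne')).mul
          (hcont.continuousAt (Icc_mem_nhds ht.1 ht.2))))
  -- derivative of x on (0,1)
  have hder : ∀ t ∈ Set.Ioo (0:ℝ) 1, HasDerivAt x (t ^ (α - 1) * (B t - A t)) t := by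
    intro t ht
    have h1 : HasDerivAt (fun u : ℝ => u ^ α) (α * t ^ (α - 1)) t :=
      Real.hasDerivAt_rpow_const (Or.inl ht.1.ne')
    have P1 : HasDerivAt (fun u : ℝ => (1/α) * (1 - u ^ α)) ((1/α) * (0 - α * t ^ (α-1))) t :=
      ((hasDerivAt_const t (1:ℝ)).sub h1).const_mul (1/α)
    have P2 := P1.mul (hAd t ht)
    have P3 : HasDerivAt (fun u : ℝ => (1/α) * u ^ α) ((1/α) * (α * t ^ (α-1))) t :=
      h1.const_mul (1/α)
    have P4 := P3.mul (hBd t ht)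
    have hsplit : t ^ (α + β - 1) = t ^ α * t ^ (β - 1) := by
      rw [← Real.rpow_add ht.1]; ring_nf
    have hF : HasDerivAt (fun u => (1/α) * (1 - u^α) * A u + (1/α) * u^α * B u)
        (t ^ (α - 1) * (B t - A t)) t := by
      refine (P2.add P4).congr_deriv ?_
      rw [hsplit]
      field_simp
      ring
    have hev : x =ᶠ[nhds t]
        (fun u => (1/α) * (1 - u^α) * A u + (1/α) * u^α * B u) := by
      filter_upwards [isOpen_Ioo.mem_nhds ht] with u hu
      exact key u ⟨hu.1.le, hu.2.le⟩
    exact hF.congr_of_eventuallyEq hev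
  refine ⟨x0, x1, ?_⟩
  intro t ht
  have hev2 : (fun τ => τ ^ (1 - α) * deriv x τ) =ᶠ[nhds t] (fun τ => B τ - A τ) := by
    filter_upwards [isOpen_Ioo.mem_nhds ht] with u hu
    rw [(hder u hu).deriv, ← mul_assoc, ← Real.rpow_add hu.1,
      show (1:ℝ) - α + (α - 1) = 0 by ring, Real.rpow_zero, one_mul]
  have hBA : HasDerivAt (fun τ => B τ - A τ) (-(t ^ (β - 1) * h t)) t := by
    have hsplit : t ^ (α + β - 1) = t ^ α * t ^ (β - 1) := by
      rw [← Real.rpow_add ht.1]; ring_nf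
    have := (hBd t ht).sub (hAd t ht)
    refine this.congr_deriv ?_
    rw [hsplit]; ring
  rw [hev2.deriv_eq, hBA.deriv,
    show t ^ (1-β) * -(t ^ (β-1) * h t) = -((t ^ (1-β) * t ^ (β-1)) * h t) by ring,
    ← Real.rpow_add ht.1, show (1:ℝ) - β + (β - 1) = 0 by ring, Real.rpow_zero, one_mul]
end

section
/- Let 0 < α, β ≤ 1, η ∈ (0,1), δ > 0 with 0 < δη^α < 1, and let h : [0,1] → ℝ be continuous. Define x(t) := −(1/α)∫₀^t (t^α − s^α)h(s)s^{β−1}ds − (δ t^α/(α(1 − δη^α)))∫₀^η (η^α − s^α)h(s)s^{β−1}ds + (t^α/(α(1 − δη^α)))∫₀¹ (1 − s^α)h(s)s^{β−1}ds. Then x(0) = 0, δx(η) = x(1), and for t ∈ (0,1), t^{1−β}·d/dt( t^{1−α} x'(t) ) = −h(t). -/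
open Real MeasureTheory intervalIntegral

theorem three_point_bvp_solution (α β η δ : ℝ) (hα : 0 < α) (hα1 : α ≤ 1)
    (hβ : 0 < β) (hβ1 : β ≤ 1) (hη0 : 0 < η) (hη1 : η < 1) (hδ : 0 < δ)
    (hδη : δ * η ^ α < 1)
    (h : ℝ → ℝ) (hcont : ContinuousOn h (Set.Icc 0 1))
    (x : ℝ → ℝ)
    (hx : ∀ t, x t =
      -(1 / α) * (∫ s in (0:ℝ)..t, (t ^ α - s ^ α) * h s * s ^ (β - 1)) -
      (δ * t ^ α / (α * (1 - δ * η ^ α))) *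
        (∫ s in (0:ℝ)..η, (η ^ α - s ^ α) * h s * s ^ (β - 1)) +
      (t ^ α / (α * (1 - δ * η ^ α))) *
        (∫ s in (0:ℝ)..1, (1 - s ^ α) * h s * s ^ (β - 1))) :
    x 0 = 0 ∧ δ * x η = x 1 ∧
    ∀ t ∈ Set.Ioo (0:ℝ) 1,
      t ^ (1 - β) * deriv (fun τ => τ ^ (1 - α) * deriv x τ) t = -h t := by
  have hαne : α ≠ 0 := ne_of_gt hα
  have hDpos : 0 < 1 - δ * η ^ α := by linarith
  have hDne : 1 - δ * η ^ α ≠ 0 := ne_of_gt hDpos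
  have hβ' : (-1:ℝ) < β - 1 := by linarith
  -- integrability lemmas
  have hrint : ∀ a : ℝ, IntervalIntegrable (fun s : ℝ => s ^ (β - 1)) volume 0 a :=
    fun a => intervalIntegrable_rpow' hβ'
  have huIcc : ∀ a ∈ Set.Ioc (0:ℝ) 1, Set.uIcc (0:ℝ) a ⊆ Set.Icc 0 1 := by
    intro a ha
    rw [Set.uIcc_of_le ha.1.le]
    exact Set.Icc_subset_Icc le_rfl ha.2
  have hAint : ∀ a ∈ Set.Ioc (0:ℝ) 1,
      IntervalIntegrable (fun s => h s * s ^ (β - 1)) volume 0 a := by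
    intro a ha
    exact (hrint a).continuousOn_mul (hcont.mono (huIcc a ha))
  have hBint : ∀ a ∈ Set.Ioc (0:ℝ) 1,
      IntervalIntegrable (fun s => s ^ α * h s * s ^ (β - 1)) volume 0 a := by
    intro a ha
    exact (hrint a).continuousOn_mul
      (((continuous_id.rpow_const fun _ => Or.inr hα.le).continuousOn).mul
        (hcont.mono (huIcc a ha)))
  -- splitting
  have hsplit : ∀ c : ℝ, ∀ a ∈ Set.Ioc (0:ℝ) 1,
      (∫ s in (0:ℝ)..a, (c - s ^ α) * h s * s ^ (β - 1))
        = c * (∫ s in (0:ℝ)..a, h s * s ^ (β - 1))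
          - ∫ s in (0:ℝ)..a, s ^ α * h s * s ^ (β - 1) := by
    intro c a ha
    rw [← intervalIntegral.integral_const_mul,
      ← intervalIntegral.integral_sub ((hAint a ha).const_mul c) (hBint a ha)]
    apply intervalIntegral.integral_congr
    intro s _
    ring
  refine ⟨?_, ?_, ?_⟩
  · rw [hx 0]
    simp [Real.zero_rpow hαne]
  · rw [hx η, hx 1]
    simp only [Real.one_rpow]
    set Iη := ∫ s in (0:ℝ)..η, (η ^ α - s ^ α) * h s * s ^ (β - 1)
    set I1 := ∫ s in (0:ℝ)..1, (1 - s ^ α) * h s * s ^ (β - 1)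
    field_simp
    ring
  · -- derivative part
    intro t ht
    set K : ℝ := -(δ / (α * (1 - δ * η ^ α))) *
        (∫ s in (0:ℝ)..η, (η ^ α - s ^ α) * h s * s ^ (β - 1)) +
      (1 / (α * (1 - δ * η ^ α))) *
        (∫ s in (0:ℝ)..1, (1 - s ^ α) * h s * s ^ (β - 1)) with hK
    set A : ℝ → ℝ := fun τ => ∫ s in (0:ℝ)..τ, h s * s ^ (β - 1) with hA
    set B : ℝ → ℝ := fun τ => ∫ s in (0:ℝ)..τ, s ^ α * h s * s ^ (β - 1) with hB
    have hmemIoo : Set.Ioo (0:ℝ) 1 ∈ nhds t := (isOpen_Ioo).mem_nhds ht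
    have hxf : ∀ τ ∈ Set.Ioo (0:ℝ) 1,
        x τ = -(1 / α) * (τ ^ α * A τ - B τ) + K * τ ^ α := by
      intro τ hτ
      rw [hx τ, hsplit (τ ^ α) τ ⟨hτ.1, hτ.2.le⟩, hK, hA, hB]
      ring
    -- continuity of integrands near t, on the open set Ioo 0 1
    have hcontA : ContinuousOn (fun s => h s * s ^ (β - 1)) (Set.Ioo 0 1) := by
      apply ContinuousOn.mul (hcont.mono Set.Ioo_subset_Icc_self)
      intro s hs
      exact (Real.continuousAt_rpow_const s _ (Or.inl (ne_of_gt hs.1))).continuousWithinAt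
    have hcontB : ContinuousOn (fun s => s ^ α * h s * s ^ (β - 1)) (Set.Ioo 0 1) := by
      apply ContinuousOn.mul
      · exact ((continuous_id.rpow_const fun _ => Or.inr hα.le).continuousOn).mul
          (hcont.mono Set.Ioo_subset_Icc_self)
      · intro s hs
        exact (Real.continuousAt_rpow_const s _ (Or.inl (ne_of_gt hs.1))).continuousWithinAt
    have htmem : t ∈ Set.Ioc (0:ℝ) 1 := ⟨ht.1, ht.2.le⟩
    have hAder : HasDerivAt A (h t * t ^ (β - 1)) t := by
      refine intervalIntegral.integral_hasDerivAt_right (hAint t htmem)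
        (hcontA.stronglyMeasurableAtFilter isOpen_Ioo t ht) ?_
      exact hcontA.continuousAt hmemIoo
    have hBder : HasDerivAt B (t ^ α * h t * t ^ (β - 1)) t := by
      refine intervalIntegral.integral_hasDerivAt_right (hBint t htmem)
        (hcontB.stronglyMeasurableAtFilter isOpen_Ioo t ht) ?_
      exact hcontB.continuousAt hmemIoo
    have hpow : ∀ τ ∈ Set.Ioo (0:ℝ) 1, HasDerivAt (fun τ : ℝ => τ ^ α) (α * τ ^ (α - 1)) τ :=
      fun τ hτ => Real.hasDerivAt_rpow_const (Or.inl (ne_of_gt hτ.1))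
    -- derivative of x on Ioo 0 1
    have hxder : ∀ τ ∈ Set.Ioo (0:ℝ) 1, HasDerivAt x (τ ^ (α - 1) * (α * K - A τ)) τ := by
      intro τ hτ
      have hAτ : HasDerivAt A (h τ * τ ^ (β - 1)) τ := by
        refine intervalIntegral.integral_hasDerivAt_right (hAint τ ⟨hτ.1, hτ.2.le⟩)
          (hcontA.stronglyMeasurableAtFilter isOpen_Ioo τ hτ) ?_
        exact hcontA.continuousAt (isOpen_Ioo.mem_nhds hτ)
      have hBτ : HasDerivAt B (τ ^ α * h τ * τ ^ (β - 1)) τ := by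
        refine intervalIntegral.integral_hasDerivAt_right (hBint τ ⟨hτ.1, hτ.2.le⟩)
          (hcontB.stronglyMeasurableAtFilter isOpen_Ioo τ hτ) ?_
        exact hcontB.continuousAt (isOpen_Ioo.mem_nhds hτ)
      have hf : HasDerivAt (fun σ => -(1 / α) * (σ ^ α * A σ - B σ) + K * σ ^ α)
          (-(1 / α) * ((α * τ ^ (α - 1)) * A τ + τ ^ α * (h τ * τ ^ (β - 1))
            - τ ^ α * h τ * τ ^ (β - 1)) + K * (α * τ ^ (α - 1))) τ :=
        ((((hpow τ hτ).mul hAτ).sub hBτ).const_mul _).add ((hpow τ hτ).const_mul K)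
      have heq : x =ᶠ[nhds τ] fun σ => -(1 / α) * (σ ^ α * A σ - B σ) + K * σ ^ α :=
        Filter.eventuallyEq_of_mem (isOpen_Ioo.mem_nhds hτ) hxf
      have := hf.congr_of_eventuallyEq heq
      refine this.congr_deriv ?_
      have e : (1 / α) * α = 1 := by field_simp
      linear_combination -(e * τ ^ (α - 1) * A τ)
    -- x' in Ioo, so τ^(1-α) * deriv x τ = α K - A τ on Ioo
    have hgeq : ∀ τ ∈ Set.Ioo (0:ℝ) 1, τ ^ (1 - α) * deriv x τ = α * K - A τ := by
      intro τ hτ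
      rw [(hxder τ hτ).deriv]
      rw [← mul_assoc, ← Real.rpow_add hτ.1]
      norm_num
    have hgev : (fun τ => τ ^ (1 - α) * deriv x τ) =ᶠ[nhds t] fun τ => α * K - A τ :=
      Filter.eventuallyEq_of_mem hmemIoo hgeq
    rw [hgev.deriv_eq, (hAder.const_sub (α * K)).deriv]
    have : t ^ (1 - β) * t ^ (β - 1) = 1 := by
      rw [← Real.rpow_add ht.1]
      norm_num
    rw [show t ^ (1 - β) * -(h t * t ^ (β - 1)) = -(h t) * (t ^ (1 - β) * t ^ (β - 1)) by ring,
      this, mul_one]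
end

section
/- Let 0 < α, β ≤ 1 and 0 < τ < 1 with τ^β > α/(α+β). For s ∈ [0,τ] and 0 ≤ t ≤ s, with u(t,s) = [(α+β)t^α s^β − α t^{α+β}]/(αβ(α+β)) and x₀(s) = s^{α+β}/(α(α+β)), the ratio satisfies u(t,s)/x₀(s) ≥ (t^α/(β τ^{α+β}))[(α+β)τ^β − α t^β]. -/
open Real

/-- Bernoulli-type: for `0 ≤ x ≤ 1` and `0 < a ≤ b`, `a (1 - x^b) ≤ b (1 - x^a)`. -/
lemma bern_aux {x a b : ℝ} (hx0 : 0 ≤ x) (hx1 : x ≤ 1) (ha : 0 < a) (hab : a ≤ b) :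
    a * (1 - x ^ b) ≤ b * (1 - x ^ a) := by
  have hb : 0 < b := lt_of_lt_of_le ha hab
  have hxb0 : (0:ℝ) ≤ x ^ b := Real.rpow_nonneg hx0 b
  have hxb1 : x ^ b ≤ 1 := Real.rpow_le_one hx0 hx1 hb.le
  have hp1 : a / b ≤ 1 := (div_le_one hb).mpr hab
  have hp0 : 0 ≤ a / b := by positivity
  have key := rpow_one_add_le_one_add_mul_self (s := x ^ b - 1) (by linarith) hp0 hp1
  have h1 : (1 + (x ^ b - 1)) = x ^ b := by ring
  rw [h1] at key
  have h2 : (x ^ b) ^ (a / b) = x ^ a := by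
    rw [← Real.rpow_mul hx0]
    congr 1
    field_simp
  rw [h2] at key
  -- key : x ^ a ≤ 1 + a / b * (x ^ b - 1)
  have := mul_le_mul_of_nonneg_left key hb.le
  have hdiv : b * (a / b) = a := by field_simp
  nlinarith [this]

theorem case_i_ratio_bound (α β τ : ℝ) (hα : 0 < α) (hα1 : α ≤ 1)
    (hβ : 0 < β) (hβ1 : β ≤ 1) (hτ0 : 0 < τ) (hτ1 : τ < 1)
    (hτ : α / (α + β) < τ ^ β)
    (u : ℝ → ℝ → ℝ)
    (hu : ∀ t s, u t s =
      ((α + β) * t ^ α * s ^ β - α * t ^ (α + β)) / (α * β * (α + β))) :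
    ∀ s t : ℝ, 0 ≤ s → s ≤ τ → 0 ≤ t → t ≤ s →
      (t ^ α / (β * τ ^ (α + β))) * ((α + β) * τ ^ β - α * t ^ β) ≤
        u t s / (s ^ (α + β) / (α * (α + β))) := by
  intro s t hs0 hsτ ht0 hts
  have habp : 0 < α + β := by linarith
  rw [hu]
  rcases eq_or_lt_of_le hs0 with hs | hs
  · -- s = 0, hence t = 0
    have ht : t = 0 := le_antisymm (hs ▸ hts) ht0
    subst ht
    rw [← hs]
    simp [Real.zero_rpow hα.ne', Real.zero_rpow habp.ne', Real.zero_rpow hβ.ne']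
  · -- s > 0
    have hτab : (0:ℝ) < τ ^ (α + β) := Real.rpow_pos_of_pos hτ0 _
    have hsab : (0:ℝ) < s ^ (α + β) := Real.rpow_pos_of_pos hs _
    have hrw : ((α + β) * t ^ α * s ^ β - α * t ^ (α + β)) / (α * β * (α + β)) /
        (s ^ (α + β) / (α * (α + β))) =
        ((α + β) * t ^ α * s ^ β - α * t ^ (α + β)) / (β * s ^ (α + β)) := by
      field_simp
    rw [hrw, div_mul_eq_mul_div, div_le_div_iff₀ (by positivity) (by positivity)]
    -- goal : t^α * ((α+β)τ^β - α t^β) * (β s^{α+β}) ≤ N * (β τ^{α+β})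
    have hkey : t ^ α * ((α + β) * τ ^ β - α * t ^ β) * s ^ (α + β) ≤
        ((α + β) * t ^ α * s ^ β - α * t ^ (α + β)) * τ ^ (α + β) := by
      rcases eq_or_lt_of_le ht0 with ht | ht
      · rw [← ht]
        simp [Real.zero_rpow hα.ne', Real.zero_rpow habp.ne']
      · -- t > 0
        have htab : t ^ (α + β) = t ^ α * t ^ β := Real.rpow_add ht α β
        have hsab' : s ^ (α + β) = s ^ α * s ^ β := Real.rpow_add hs α β
        have hτab' : τ ^ (α + β) = τ ^ α * τ ^ β := Real.rpow_add hτ0 α β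
        rw [htab, hsab', hτab']
        have htα : (0:ℝ) < t ^ α := Real.rpow_pos_of_pos ht α
        have hcore : ((α + β) * τ ^ β - α * t ^ β) * (s ^ α * s ^ β) ≤
            ((α + β) * s ^ β - α * t ^ β) * (τ ^ α * τ ^ β) := by
          have htsβ : t ^ β ≤ s ^ β := Real.rpow_le_rpow ht0 hts hβ.le
          have hsτα : s ^ α ≤ τ ^ α := Real.rpow_le_rpow hs0 hsτ hα.le
          have hsτβ : s ^ β ≤ τ ^ β := Real.rpow_le_rpow hs0 hsτ hβ.le
          have hsα : (0:ℝ) < s ^ α := Real.rpow_pos_of_pos hs α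
          have hsβ : (0:ℝ) < s ^ β := Real.rpow_pos_of_pos hs β
          have htβ : (0:ℝ) < t ^ β := Real.rpow_pos_of_pos ht β
          -- Bernoulli with x = s/τ, a = α, b = α+β :
          have hx0 : (0:ℝ) ≤ s / τ := by positivity
          have hx1 : s / τ ≤ 1 := (div_le_one hτ0).mpr hsτ
          have hber := bern_aux hx0 hx1 hα (by linarith : α ≤ α + β)
          have hdα : (s / τ) ^ α = s ^ α / τ ^ α := Real.div_rpow hs0 hτ0.le α
          have hdab : (s / τ) ^ (α + β) = (s ^ α * s ^ β) / (τ ^ α * τ ^ β) := by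
            rw [Real.div_rpow hs0 hτ0.le, hsab', hτab']
          rw [hdα, hdab] at hber
          have hτα : (0:ℝ) < τ ^ α := Real.rpow_pos_of_pos hτ0 α
          have hτβ : (0:ℝ) < τ ^ β := Real.rpow_pos_of_pos hτ0 β
          -- key2 : α (τ^α τ^β - s^α s^β) ≤ (α+β) τ^β (τ^α - s^α)
          have key2 : α * (τ ^ α * τ ^ β - s ^ α * s ^ β) ≤
              (α + β) * τ ^ β * (τ ^ α - s ^ α) := by
            have hm := mul_le_mul_of_nonneg_left hber (le_of_lt (by positivity :
              (0:ℝ) < τ ^ α * τ ^ β))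
            have e1 : (τ ^ α * τ ^ β) * (α * (1 - s ^ α * s ^ β / (τ ^ α * τ ^ β))) =
                α * (τ ^ α * τ ^ β - s ^ α * s ^ β) := by
              field_simp
            have e2 : (τ ^ α * τ ^ β) * ((α + β) * (1 - s ^ α / τ ^ α)) =
                (α + β) * τ ^ β * (τ ^ α - s ^ α) := by
              field_simp
            rw [e1, e2] at hm
            exact hm
          have hM : (0:ℝ) ≤ τ ^ α * τ ^ β - s ^ α * s ^ β := by
            nlinarith [mul_le_mul hsτα hsτβ hsβ.le hτα.le]
          nlinarith [mul_le_mul_of_nonneg_left key2 hsβ.le,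
            mul_le_mul_of_nonneg_right (mul_le_mul_of_nonneg_left htsβ hα.le) hM]
        calc t ^ α * ((α + β) * τ ^ β - α * t ^ β) * (s ^ α * s ^ β)
            = t ^ α * (((α + β) * τ ^ β - α * t ^ β) * (s ^ α * s ^ β)) := by ring
          _ ≤ t ^ α * (((α + β) * s ^ β - α * t ^ β) * (τ ^ α * τ ^ β)) :=
              mul_le_mul_of_nonneg_left hcore htα.le
          _ = ((α + β) * t ^ α * s ^ β - α * (t ^ α * t ^ β)) * (τ ^ α * τ ^ β) := by ring
    nlinarith [mul_le_mul_of_nonneg_left hkey hβ.le]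
end
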